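/- Let β ∈ (0,1) and Λ > 0. Then there exists a constant C = C(β,Λ) > 0 such that for every k ≥ 0, every λ ∈ (0,Λ], and every C² function u : [0,∞) → ℝ with u(0) = 0 satisfying −u''(x) + (x−k)² u(x) = λ u(x) for all x ≥ 0, with u, u' ∈ L²(0,∞) and ∫₀^∞ u(x)² dx = 1, one has |u(x)| ≤ C e^{−β (x−k)²/2} for all x ≥ 0. -/

import Mathlib

open MeasureTheory Filter Set Topology

lemma agmon_min_principle (a b : ℝ) (h h1 h2 : ℝ → ℝ) (hab : a ≤ b)
    (hc : ContinuousOn h (Icc a b))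
    (hd1 : ∀ x ∈ Ioo a b, HasDerivAt h (h1 x) x)
    (hd2 : ∀ x ∈ Ioo a b, HasDerivAt h1 (h2 x) x)
    (hneg : ∀ x ∈ Ioo a b, h x < 0 → h2 x < 0) :
    ∀ x ∈ Icc a b, min (min (h a) (h b)) 0 ≤ h x := by
  obtain ⟨m, hm, hmin⟩ := isCompact_Icc.exists_isMinOn ⟨a, left_mem_Icc.2 hab⟩ hc
  intro x hx
  have hmx : h m ≤ h x := hmin hx
  rcases le_or_gt 0 (h m) with h0 | h0
  · exact le_trans (min_le_right _ _) (le_trans h0 hmx)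
  rcases eq_or_lt_of_le hm.1 with rfl | ham
  · exact le_trans (le_trans (min_le_left _ _) (min_le_left _ _)) hmx
  rcases eq_or_lt_of_le hm.2 with rfl | hmb
  · exact le_trans (le_trans (min_le_left _ _) (min_le_right _ _)) hmx
  exfalso
  have hmo : m ∈ Ioo a b := ⟨ham, hmb⟩
  have hloc : IsLocalMin h m := hmin.isLocalMin (Icc_mem_nhds ham hmb)
  have h1m : h1 m = 0 := by
    have := hloc.deriv_eq_zero
    rwa [(hd1 m hmo).deriv] at this
  have h2m : h2 m < 0 := hneg m hmo h0
  have hslope := hasDerivAt_iff_tendsto_slope.1 (hd2 m hmo)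
  have hev0 : ∀ᶠ y in 𝓝[≠] m, slope h1 m y < 0 := hslope (Iio_mem_nhds h2m)
  have hev : ∀ᶠ y in 𝓝[>] m, slope h1 m y < 0 :=
    hev0.filter_mono (nhdsWithin_mono m fun y hy => ne_of_gt hy)
  obtain ⟨c, hc', hsub⟩ := mem_nhdsGT_iff_exists_Ioo_subset.1 hev
  set c' : ℝ := min c b with hc'def
  have hmc' : m < c' := lt_min (by exact hc') hmb
  have h1neg : ∀ y ∈ Ioo m c', h1 y < 0 := by
    intro y hy
    have hs : slope h1 m y < 0 := hsub ⟨hy.1, lt_of_lt_of_le hy.2 (min_le_left _ _)⟩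
    have : slope h1 m y = h1 y / (y - m) := by
      simp [slope_def_field, h1m, div_eq_mul_inv]
    rw [this] at hs
    have hym : 0 < y - m := sub_pos.2 hy.1
    by_contra hge
    push_neg at hge
    exact absurd hs (not_lt.2 (div_nonneg hge hym.le))
  have hIcc : Icc m c' ⊆ Icc a b := Icc_subset_Icc (le_of_lt ham) (min_le_right _ _)
  have hanti : StrictAntiOn h (Icc m c') := by
    apply strictAntiOn_of_deriv_neg (convex_Icc m c') (hc.mono hIcc)
    intro y hy
    rw [interior_Icc] at hy
    have hyab : y ∈ Ioo a b := ⟨lt_trans ham hy.1, lt_of_lt_of_le hy.2 (min_le_right _ _)⟩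
    rw [(hd1 y hyab).deriv]
    exact h1neg y hy
  have hlt : h c' < h m :=
    hanti (left_mem_Icc.2 (le_of_lt hmc')) (right_mem_Icc.2 (le_of_lt hmc')) hmc'
  exact absurd (hmin (hIcc (right_mem_Icc.2 (le_of_lt hmc')))) (not_le.2 hlt)

lemma gaussAux_hasDerivAt (β k c x : ℝ) :
    HasDerivAt (fun y => c * Real.exp (-β * (y - k) ^ 2 / 2))
      (-β * (x - k) * (c * Real.exp (-β * (x - k) ^ 2 / 2))) x := by
  have h1 : HasDerivAt (fun y : ℝ => (y - k) ^ 2) (2 * (x - k)) x := by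
    simpa using ((hasDerivAt_id x).sub_const k).fun_pow 2
  have h2 : HasDerivAt (fun y : ℝ => -β / 2 * (y - k) ^ 2) (-β / 2 * (2 * (x - k))) x :=
    h1.const_mul _
  have hfe : (fun y : ℝ => -β * (y - k) ^ 2 / 2) = fun y : ℝ => -β / 2 * (y - k) ^ 2 := by
    funext y; ring
  have h0 : HasDerivAt (fun y : ℝ => -β * (y - k) ^ 2 / 2) (-β / 2 * (2 * (x - k))) x := by
    rw [hfe]; exact h2
  have h3 := (h0.exp).const_mul c
  refine h3.congr_deriv ?_
  ring

lemma gaussAux_hasDerivAt2 (β k c x : ℝ) :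
    HasDerivAt (fun y => -β * (y - k) * (c * Real.exp (-β * (y - k) ^ 2 / 2)))
      ((β ^ 2 * (x - k) ^ 2 - β) * (c * Real.exp (-β * (x - k) ^ 2 / 2))) x := by
  have hA : HasDerivAt (fun y : ℝ => -β * (y - k)) (-β) x := by
    simpa using ((hasDerivAt_id x).sub_const k).const_mul (-β)
  have hB := gaussAux_hasDerivAt β k c x
  have h := hA.fun_mul hB
  refine h.congr_deriv ?_
  ring

set_option maxHeartbeats 1000000 in
/-- uniform Agmon estimate: for β ∈ (0,1) and Λ > 0 there is C = C(β,Λ) such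
that every normalized Dirichlet eigenfunction of `-d²/dx² + (x-k)²` on (0,∞) with k ≥ 0 and
eigenvalue λ ∈ (0,Λ] satisfies `|u(x)| ≤ C e^{-β(x-k)²/2}` for all x ≥ 0. -/
theorem uniform_agmon_estimate (β Λ : ℝ) (hβ : β ∈ Set.Ioo (0:ℝ) 1) (hΛ : 0 < Λ) :
    ∃ C > 0, ∀ k ≥ (0:ℝ), ∀ lam ∈ Set.Ioc (0:ℝ) Λ, ∀ u v w : ℝ → ℝ,
      (∀ x ∈ Set.Ici (0:ℝ), HasDerivWithinAt u (v x) (Set.Ici 0) x) →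
      (∀ x ∈ Set.Ici (0:ℝ), HasDerivWithinAt v (w x) (Set.Ici 0) x) →
      ContinuousOn w (Set.Ici 0) →
      u 0 = 0 →
      (∀ x ≥ (0:ℝ), -w x + (x - k) ^ 2 * u x = lam * u x) →
      MeasureTheory.IntegrableOn (fun x => (u x) ^ 2) (Set.Ioi 0) →
      MeasureTheory.IntegrableOn (fun x => (v x) ^ 2) (Set.Ioi 0) →
      (∫ x in Set.Ioi (0:ℝ), (u x) ^ 2) = 1 →
      ∀ x ≥ (0:ℝ), |u x| ≤ C * Real.exp (-β * (x - k) ^ 2 / 2) := by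
  obtain ⟨hβ0, hβ1⟩ := hβ
  have hβ2 : (0:ℝ) < 1 - β ^ 2 := by nlinarith
  set s2 : ℝ := Λ / (1 - β ^ 2) with hs2def
  have hs2pos : 0 < s2 := div_pos hΛ hβ2
  set B : ℝ := Real.sqrt (1 + Λ) with hBdef
  have hBpos : 0 < B := Real.sqrt_pos.2 (by linarith)
  set C : ℝ := B * Real.exp (β * s2 / 2) with hCdef
  have hCpos : 0 < C := mul_pos hBpos (Real.exp_pos _)
  refine ⟨C, hCpos, ?_⟩
  intro k hk lam hlam u v w hu hv hw hu0 heq hIu hIv hnorm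
  obtain ⟨hlam0, hlamΛ⟩ := hlam
  -- basic consequences
  have hcu : ContinuousOn u (Ici 0) := fun x hx => (hu x hx).continuousWithinAt
  have hcv : ContinuousOn v (Ici 0) := fun x hx => (hv x hx).continuousWithinAt
  have huD : ∀ x : ℝ, 0 < x → HasDerivAt u (v x) x := fun x hx =>
    (hu x (le_of_lt hx)).hasDerivAt (Ici_mem_nhds hx)
  have hvD : ∀ x : ℝ, 0 < x → HasDerivAt v (w x) x := fun x hx =>
    (hv x (le_of_lt hx)).hasDerivAt (Ici_mem_nhds hx)
  have hweq : ∀ x : ℝ, 0 ≤ x → w x = ((x - k) ^ 2 - lam) * u x := by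
    intro x hx
    have := heq x hx
    nlinarith [this]
  -- integrability of u*v
  have habs_mul : ∀ a b : ℝ, |a * b| ≤ a ^ 2 + b ^ 2 := by
    intro a b
    rw [abs_mul]
    nlinarith [sq_nonneg (|a| - |b|), sq_abs a, sq_abs b, abs_nonneg a, abs_nonneg b]
  have hIuv : IntegrableOn (fun x => u x * v x) (Ioi 0) := by
    refine Integrable.mono (hIu.add hIv)
      (((hcu.mono Ioi_subset_Ici_self).mul (hcv.mono Ioi_subset_Ici_self)).aestronglyMeasurable
        measurableSet_Ioi) ?_
    filter_upwards with x
    simp only [Pi.add_apply, Real.norm_eq_abs]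
    rw [abs_of_nonneg (by positivity : (0:ℝ) ≤ u x ^ 2 + v x ^ 2)]
    exact habs_mul (u x) (v x)
  -- FTC for u^2
  have hftc1 : ∀ R : ℝ, 0 ≤ R → u R ^ 2 = ∫ x in (0:ℝ)..R, 2 * (u x * v x) := by
    intro R hR
    have hIccIci : Icc (0:ℝ) R ⊆ Ici 0 := Icc_subset_Ici_self
    have h := intervalIntegral.integral_eq_sub_of_hasDeriv_right_of_le hR
      (f := fun x => u x ^ 2) (f' := fun x => 2 * (u x * v x))
      ((hcu.mono hIccIci).pow 2)
      (fun x hx => by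
        have hd : HasDerivAt (fun y => u y ^ 2) (2 * (u x * v x)) x := by
          have := (huD x hx.1).fun_pow 2
          refine this.congr_deriv ?_
          push_cast
          ring
        exact hd.hasDerivWithinAt)
      (by
        apply ContinuousOn.intervalIntegrable
        rw [uIcc_of_le hR]
        exact continuousOn_const.mul ((hcu.mono hIccIci).mul (hcv.mono hIccIci)))
    rw [h]
    rw [hu0]
    ring
  -- u^2 tends to 0 at infinity
  have hu2lim : Tendsto (fun R => u R ^ 2) atTop (𝓝 0) := by
    have hI2uv : IntegrableOn (fun x => 2 * (u x * v x)) (Ioi 0) := hIuv.const_mul 2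
    have htend := intervalIntegral_tendsto_integral_Ioi 0 hI2uv tendsto_id
    set L : ℝ := ∫ x in Ioi (0:ℝ), 2 * (u x * v x) with hLdef
    have hlim : Tendsto (fun R => u R ^ 2) atTop (𝓝 L) := by
      refine htend.congr' ?_
      filter_upwards [eventually_ge_atTop (0:ℝ)] with R hR
      exact (hftc1 R hR).symm
    have hL0 : 0 ≤ L := ge_of_tendsto hlim (by filter_upwards with R; positivity)
    have hLzero : L = 0 := by
      by_contra hL
      have hLpos : 0 < L := hL0.lt_of_ne (Ne.symm hL)
      have hev : ∀ᶠ R in atTop, L / 2 < u R ^ 2 :=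
        hlim.eventually (lt_mem_nhds (by linarith : L / 2 < L))
      obtain ⟨X, hX⟩ := (hev.and (eventually_ge_atTop (0:ℝ))).exists_forall_of_atTop
      set Y : ℝ := max X 0 with hYdef
      have hconst : Integrable (fun _ : ℝ => L / 2) (volume.restrict (Ioi Y)) := by
        refine Integrable.mono (hIu.mono_set (Ioi_subset_Ioi (le_max_right X 0)))
          aestronglyMeasurable_const ?_
        refine (ae_restrict_iff' measurableSet_Ioi).2 (ae_of_all _ fun x hx => ?_)
        have h1 := hX x (le_of_lt (lt_of_le_of_lt (le_max_left X 0) hx))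
        simp only [Real.norm_eq_abs]
        rw [abs_of_nonneg (by linarith : (0:ℝ) ≤ L / 2), abs_of_nonneg (by positivity : (0:ℝ) ≤ u x ^ 2)]
        linarith [h1.1]
      rw [integrable_const_iff] at hconst
      rcases hconst with h | h
      · exact absurd h (by intro h'; linarith)
      · rw [isFiniteMeasure_restrict, Real.volume_Ioi] at h
        exact absurd h (by simp)
    rw [hLzero] at hlim
    exact hlim
  have hulim : Tendsto u atTop (𝓝 0) := by
    have h1 : Tendsto (fun R => Real.sqrt (u R ^ 2)) atTop (𝓝 (Real.sqrt 0)) :=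
      (Real.continuous_sqrt.tendsto 0).comp hu2lim
    rw [Real.sqrt_zero] at h1
    have h2 : Tendsto (fun R => |u R|) atTop (𝓝 0) := by
      refine h1.congr fun R => ?_
      exact Real.sqrt_sq_eq_abs (u R)
    exact tendsto_zero_iff_abs_tendsto_zero u |>.2 h2
  -- energy bound on v
  -- interval integrability helpers
  have hIccIci : ∀ R : ℝ, Icc (0:ℝ) R ⊆ Ici 0 := fun R => Icc_subset_Ici_self
  have hIvv : ∀ R : ℝ, 0 ≤ R → IntervalIntegrable (fun x => v x * v x) volume 0 R := by
    intro R hR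
    apply ContinuousOn.intervalIntegrable
    rw [uIcc_of_le hR]
    exact (hcv.mono (hIccIci R)).mul (hcv.mono (hIccIci R))
  have hIuw : ∀ R : ℝ, 0 ≤ R → IntervalIntegrable (fun x => u x * w x) volume 0 R := by
    intro R hR
    apply ContinuousOn.intervalIntegrable
    rw [uIcc_of_le hR]
    exact (hcu.mono (hIccIci R)).mul (hw.mono (hIccIci R))
  have hIu2 : ∀ R : ℝ, 0 ≤ R → IntervalIntegrable (fun x => u x ^ 2) volume 0 R := by
    intro R hR
    apply ContinuousOn.intervalIntegrable
    rw [uIcc_of_le hR]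
    exact (hcu.mono (hIccIci R)).pow 2
  -- the truncated L2 norm of u is at most 1
  have hu2le1 : ∀ R : ℝ, 0 ≤ R → (∫ x in (0:ℝ)..R, u x ^ 2) ≤ 1 := by
    intro R hR
    rw [intervalIntegral.integral_of_le hR, ← hnorm]
    apply setIntegral_mono_set hIu
    · exact ae_of_all _ fun x => sq_nonneg (u x)
    · exact HasSubset.Subset.eventuallyLE Ioc_subset_Ioi_self
  -- FTC for u*v
  have hftc2 : ∀ R : ℝ, 0 ≤ R →
      (∫ x in (0:ℝ)..R, (v x * v x + u x * w x)) = u R * v R := by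
    intro R hR
    have h := intervalIntegral.integral_eq_sub_of_hasDeriv_right_of_le hR
      (f := fun x => u x * v x) (f' := fun x => v x * v x + u x * w x)
      ((hcu.mono (hIccIci R)).mul (hcv.mono (hIccIci R)))
      (fun x hx => ((huD x hx.1).mul (hvD x hx.1)).hasDerivWithinAt)
      ((hIvv R hR).add (hIuw R hR))
    rw [h]
    rw [hu0]
    ring
  -- hence a bound on the truncated integral of v*v
  have hvtrunc : ∀ R : ℝ, 0 ≤ R →
      (∫ x in (0:ℝ)..R, v x * v x) ≤ u R * v R + Λ := by
    intro R hR
    have hsplit : (∫ x in (0:ℝ)..R, v x * v x) + (∫ x in (0:ℝ)..R, u x * w x)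
        = u R * v R := by
      rw [← intervalIntegral.integral_add (hIvv R hR) (hIuw R hR)]
      exact hftc2 R hR
    have hlow : -lam * (∫ x in (0:ℝ)..R, u x ^ 2) ≤ ∫ x in (0:ℝ)..R, u x * w x := by
      rw [← intervalIntegral.integral_const_mul]
      apply intervalIntegral.integral_mono_on hR ((hIu2 R hR).const_mul (-lam)) (hIuw R hR)
      intro x hx
      rw [hweq x hx.1]
      nlinarith [sq_nonneg ((x - k) * u x), sq_nonneg (u x)]
    have h2 : lam * (∫ x in (0:ℝ)..R, u x ^ 2) ≤ Λ := by
      have := hu2le1 R hR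
      have h3 : (0:ℝ) ≤ ∫ x in (0:ℝ)..R, u x ^ 2 :=
        intervalIntegral.integral_nonneg hR fun x _ => sq_nonneg (u x)
      nlinarith
    nlinarith [hsplit, hlow, h2]
  -- boundary terms can be made small along a sequence
  have hbnd : ∀ ε : ℝ, 0 < ε → ∀ X : ℝ, ∃ R, max X 0 ≤ R ∧ |u R * v R| ≤ ε := by
    intro ε hε X
    by_contra hcon
    push_neg at hcon
    have hall : ∀ R ∈ Ioi (max X 0), ε ≤ |u R * v R| := fun R hR =>
      le_of_lt (hcon R (le_of_lt hR))
    have hconst : Integrable (fun _ : ℝ => ε) (volume.restrict (Ioi (max X 0))) := by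
      refine Integrable.mono (hIuv.mono_set (Ioi_subset_Ioi (le_max_right X 0)))
        aestronglyMeasurable_const ?_
      refine (ae_restrict_iff' measurableSet_Ioi).2 (ae_of_all _ fun x hx => ?_)
      simp only [Real.norm_eq_abs]
      rw [abs_of_nonneg hε.le]
      exact hall x hx
    rw [integrable_const_iff] at hconst
    rcases hconst with h | h
    · exact absurd h (by intro h'; linarith)
    · rw [isFiniteMeasure_restrict, Real.volume_Ioi] at h
      exact absurd h (by simp)
  -- all truncated integrals are bounded by Λ + ε
  have hallR : ∀ ε : ℝ, 0 < ε → ∀ R : ℝ, 0 ≤ R →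
      (∫ x in (0:ℝ)..R, v x * v x) ≤ Λ + ε := by
    intro ε hε R hR
    obtain ⟨R', hR'1, hR'2⟩ := hbnd ε hε R
    have hRR' : R ≤ R' := le_trans (le_max_left R 0) hR'1
    have hR'0 : 0 ≤ R' := le_trans (le_max_right R 0) hR'1
    have hmono : (∫ x in (0:ℝ)..R, v x * v x) ≤ ∫ x in (0:ℝ)..R', v x * v x := by
      have hadd := intervalIntegral.integral_add_adjacent_intervals (hIvv R hR)
        ((hIvv R' hR'0).mono_set (by rw [uIcc_of_le hRR', uIcc_of_le hR'0]; exact Icc_subset_Icc hR le_rfl))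
      have hpos : (0:ℝ) ≤ ∫ x in R..R', v x * v x :=
        intervalIntegral.integral_nonneg hRR' fun x _ => mul_self_nonneg (v x)
      linarith [hadd.symm.le, hadd.le]
    have := hvtrunc R' hR'0
    have habs := abs_le.1 hR'2
    linarith
  have hvbound : (∫ x in Ioi (0:ℝ), v x ^ 2) ≤ Λ := by
    have hIvv' : IntegrableOn (fun x => v x * v x) (Ioi 0) := by
      refine hIv.congr_fun (fun x _ => ?_) measurableSet_Ioi
      show v x ^ 2 = v x * v x
      rw [pow_two]
    have hlimv := intervalIntegral_tendsto_integral_Ioi 0 hIvv' tendsto_id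
    have hval : (∫ x in Ioi (0:ℝ), v x ^ 2) = ∫ x in Ioi (0:ℝ), v x * v x := by
      refine setIntegral_congr_fun measurableSet_Ioi fun x _ => ?_
      rw [pow_two]
    rw [hval]
    have key : ∀ ε : ℝ, 0 < ε → (∫ x in Ioi (0:ℝ), v x * v x) ≤ Λ + ε := by
      intro ε hε
      refine le_of_tendsto hlimv ?_
      filter_upwards [eventually_ge_atTop (0:ℝ)] with R hR
      exact hallR ε hε R hR
    by_contra hcon
    push_neg at hcon
    have := key (((∫ x in Ioi (0:ℝ), v x * v x) - Λ) / 2) (by linarith)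
    linarith
  -- uniform sup bound
  have hsupu : ∀ x : ℝ, 0 ≤ x → |u x| ≤ B := by
    intro x hx
    have hv2le : (∫ y in (0:ℝ)..x, v y ^ 2) ≤ Λ := by
      rw [intervalIntegral.integral_of_le hx]
      refine le_trans (setIntegral_mono_set hIv (ae_of_all _ fun y => sq_nonneg (v y))
        (HasSubset.Subset.eventuallyLE Ioc_subset_Ioi_self)) hvbound
    have hIv2 : IntervalIntegrable (fun y => v y ^ 2) volume 0 x := by
      apply ContinuousOn.intervalIntegrable
      rw [uIcc_of_le hx]
      exact (hcv.mono Icc_subset_Ici_self).pow 2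
    have hIu2' : IntervalIntegrable (fun y => u y ^ 2) volume 0 x := by
      apply ContinuousOn.intervalIntegrable
      rw [uIcc_of_le hx]
      exact (hcu.mono Icc_subset_Ici_self).pow 2
    have hI2uv' : IntervalIntegrable (fun y => 2 * (u y * v y)) volume 0 x := by
      apply ContinuousOn.intervalIntegrable
      rw [uIcc_of_le hx]
      exact continuousOn_const.mul ((hcu.mono Icc_subset_Ici_self).mul (hcv.mono Icc_subset_Ici_self))
    have h1 : u x ^ 2 ≤ 1 + Λ := by
      rw [hftc1 x hx]
      have hmono : (∫ y in (0:ℝ)..x, 2 * (u y * v y))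
          ≤ ∫ y in (0:ℝ)..x, (u y ^ 2 + v y ^ 2) := by
        apply intervalIntegral.integral_mono_on hx hI2uv' (hIu2'.add hIv2)
        intro y _
        nlinarith [sq_nonneg (u y - v y)]
      have hsplit : (∫ y in (0:ℝ)..x, (u y ^ 2 + v y ^ 2))
          = (∫ y in (0:ℝ)..x, u y ^ 2) + ∫ y in (0:ℝ)..x, v y ^ 2 :=
        intervalIntegral.integral_add hIu2' hIv2
      have hu2 : (∫ y in (0:ℝ)..x, u y ^ 2) ≤ 1 := hu2le1 x hx
      linarith
    have h2 : |u x| = Real.sqrt (u x ^ 2) := (Real.sqrt_sq_eq_abs (u x)).symm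
    rw [h2, hBdef]
    exact Real.sqrt_le_sqrt h1
  -- the comparison (Gaussian) function
  set G : ℝ → ℝ := fun x => C * Real.exp (-β * (x - k) ^ 2 / 2) with hGdef
  have hGpos : ∀ x, 0 < G x := fun x => mul_pos hCpos (Real.exp_pos _)
  have hGlim : Tendsto G atTop (𝓝 0) := by
    have h1 : Tendsto (fun x : ℝ => x - k) atTop atTop := tendsto_atTop_add_const_right _ (-k) tendsto_id
    have h2 : Tendsto (fun x : ℝ => (x - k) ^ 2) atTop atTop :=
      (tendsto_pow_atTop (two_ne_zero)).comp h1
    have h3 : Tendsto (fun x : ℝ => -β * (x - k) ^ 2 / 2) atTop atBot := by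
      have h4 := h2.const_mul_atTop (show (0:ℝ) < β / 2 from by positivity)
      have h5 := tendsto_neg_atTop_atBot.comp h4
      refine h5.congr fun x => ?_
      show -(β / 2 * (x - k) ^ 2) = _
      ring
    have h6 : Tendsto (fun x : ℝ => Real.exp (-β * (x - k) ^ 2 / 2)) atTop (𝓝 0) :=
      Real.tendsto_exp_atBot.comp h3
    have h8 : Tendsto (fun x => C * Real.exp (-β * (x - k) ^ 2 / 2)) atTop (𝓝 (C * 0)) :=
      h6.const_mul C
    rw [mul_zero] at h8
    exact h8
  -- at distance sqrt s2 from k, G = B exactly; in between, G ≥ B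
  have hGB : ∀ x : ℝ, (x - k) ^ 2 ≤ s2 → B ≤ G x := by
    intro x hxs
    have hGx : G x = B * Real.exp (β * s2 / 2 + -β * (x - k) ^ 2 / 2) := by
      rw [Real.exp_add]
      show C * Real.exp (-β * (x - k) ^ 2 / 2) = _
      rw [hCdef]
      ring
    rw [hGx]
    nth_rewrite 1 [show B = B * 1 from (mul_one B).symm]
    apply mul_le_mul_of_nonneg_left _ hBpos.le
    rw [show (1:ℝ) = Real.exp 0 from Real.exp_zero.symm]
    apply Real.exp_le_exp.2
    nlinarith
  -- main one-sided comparison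
  have main : ∀ U V W : ℝ → ℝ,
      (∀ x : ℝ, 0 < x → HasDerivAt U (V x) x) →
      (∀ x : ℝ, 0 < x → HasDerivAt V (W x) x) →
      ContinuousOn U (Ici 0) →
      (∀ x : ℝ, 0 ≤ x → W x = ((x - k) ^ 2 - lam) * U x) →
      (∀ x : ℝ, 0 ≤ x → U x ≤ B) →
      U 0 = 0 →
      Tendsto U atTop (𝓝 0) →
      ∀ x : ℝ, 0 ≤ x → U x ≤ G x := by
    have hΛs2 : Λ = s2 * (1 - β ^ 2) := by rw [hs2def]; field_simp
    have hs2β : s2 * (1 - β ^ 2) < s2 := by nlinarith [mul_pos hs2pos (mul_pos hβ0 hβ0)]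
    have hq : ∀ y : ℝ, s2 ≤ (y - k) ^ 2 → 0 < (y - k) ^ 2 - lam := by
      intro y hy
      linarith
    have hsuper : ∀ y : ℝ, s2 ≤ (y - k) ^ 2 →
        (β ^ 2 * (y - k) ^ 2 - β) * G y ≤ ((y - k) ^ 2 - lam) * G y := by
      intro y hy
      apply mul_le_mul_of_nonneg_right _ (hGpos y).le
      linarith [mul_le_mul_of_nonneg_left hy hβ2.le, hβ0.le]
    have hGc : Continuous G := by
      have h1 : Continuous fun x : ℝ => -β * (x - k) ^ 2 / 2 :=
        ((continuous_const.mul ((continuous_id.sub continuous_const).pow 2))).div_const 2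
      exact continuous_const.mul (Real.continuous_exp.comp h1)
    intro U V W hUD hVD hUc hWeq hUB hU0 hUlim x hx
    have claim : ∀ a b : ℝ, 0 ≤ a → a ≤ b → (∀ y ∈ Ioo a b, s2 ≤ (y - k) ^ 2) →
        ∀ z ∈ Icc a b, min (min (G a - U a) (G b - U b)) 0 ≤ G z - U z := by
      intro a b ha hab hreg
      have hIccI : Icc a b ⊆ Ici 0 := fun y hy => le_trans ha hy.1
      refine agmon_min_principle a b (fun y => G y - U y)
        (fun y => -β * (y - k) * G y - V y)
        (fun y => (β ^ 2 * (y - k) ^ 2 - β) * G y - W y) hab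
        ((hGc.continuousOn).sub (hUc.mono hIccI)) ?_ ?_ ?_
      · intro y hy
        exact (gaussAux_hasDerivAt β k C y).sub (hUD y (lt_of_le_of_lt ha hy.1))
      · intro y hy
        exact (gaussAux_hasDerivAt2 β k C y).sub (hVD y (lt_of_le_of_lt ha hy.1))
      · intro y hy hneg
        have hneg' : G y - U y < 0 := hneg
        have hr := hreg y hy
        have hqpos := hq y hr
        have h2le := hsuper y hr
        have hWy := hWeq y (le_of_lt (lt_of_le_of_lt ha hy.1))
        have hmul : ((y - k) ^ 2 - lam) * (G y - U y) < 0 := mul_neg_of_pos_of_neg hqpos hneg'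
        show (β ^ 2 * (y - k) ^ 2 - β) * G y - W y < 0
        rw [hWy]
        nlinarith [hmul, h2le]
    rcases le_or_gt ((x - k) ^ 2) s2 with hcase | hcase
    · have h1 := hGB x hcase
      have h2 := hUB x hx
      linarith
    · set r : ℝ := Real.sqrt s2 with hrdef
      have hr0 : 0 ≤ r := Real.sqrt_nonneg s2
      have hr2 : r ^ 2 = s2 := Real.sq_sqrt hs2pos.le
      rcases le_total x k with hxk | hxk
      · -- left of the well
        have hxa : x ≤ k - r := by
          by_contra hcon
          push_neg at hcon
          nlinarith [hr2, hcase, hr0]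
        have hkr0 : (0:ℝ) ≤ k - r := le_trans hx hxa
        have hGa' : B ≤ G (k - r) := hGB (k - r) (by nlinarith [hr2])
        have hU1 : U (k - r) ≤ B := hUB _ hkr0
        have hh0 : 0 ≤ G 0 - U 0 := by rw [hU0]; simpa using (hGpos 0).le
        have hhb : 0 ≤ G (k - r) - U (k - r) := by linarith
        have hreg : ∀ y ∈ Ioo (0:ℝ) (k - r), s2 ≤ (y - k) ^ 2 := by
          intro y hy
          nlinarith [hr2, hy.2, hr0]
        have hmin := claim 0 (k - r) le_rfl hkr0 hreg x ⟨hx, hxa⟩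
        have hminpos : (0:ℝ) ≤ min (min (G 0 - U 0) (G (k - r) - U (k - r))) 0 :=
          le_min (le_min hh0 hhb) le_rfl
        linarith
      · -- right of the well
        have hxa : k + r ≤ x := by
          by_contra hcon
          push_neg at hcon
          nlinarith [hr2, hcase, hr0]
        have ha0 : (0:ℝ) ≤ k + r := add_nonneg hk hr0
        have hGa' : B ≤ G (k + r) := hGB (k + r) (by nlinarith [hr2])
        have hU1 : U (k + r) ≤ B := hUB _ ha0
        have hha : 0 ≤ G (k + r) - U (k + r) := by linarith
        have hGU : Tendsto (fun y => G y - U y) atTop (𝓝 0) := by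
          simpa using hGlim.sub hUlim
        have hfinal : ∀ ε : ℝ, 0 < ε → -ε ≤ G x - U x := by
          intro ε hε
          have hball : ∀ᶠ z in 𝓝 (0:ℝ), |z| < ε := by
            filter_upwards [Metric.ball_mem_nhds (0:ℝ) hε] with z hz
            simpa [Real.dist_eq] using hz
          have hev : ∀ᶠ y in atTop, |G y - U y| < ε := hGU.eventually hball
          obtain ⟨b, hb1, hb2⟩ := (hev.and (eventually_ge_atTop x)).exists
          have hreg : ∀ y ∈ Ioo (k + r) b, s2 ≤ (y - k) ^ 2 := by
            intro y hy
            nlinarith [hr2, hy.1, hr0]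
          have hmin := claim (k + r) b ha0 (le_trans hxa hb2) hreg x ⟨hxa, hb2⟩
          have habs := abs_lt.1 hb1
          have hm1 : -ε ≤ min (min (G (k + r) - U (k + r)) (G b - U b)) 0 :=
            le_min (le_min (by linarith) (by linarith)) (by linarith)
          linarith
        by_contra hcon
        push_neg at hcon
        have := hfinal ((U x - G x) / 2) (by linarith)
        linarith
  intro x hx
  have h1 : u x ≤ G x := main u v w huD hvD hcu hweq
    (fun y hy => (abs_le.1 (hsupu y hy)).2) hu0 hulim x hx
  have h2 : -u x ≤ G x := by
    refine main (fun y => -u y) (fun y => -v y) (fun y => -w y)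
      (fun y hy => (huD y hy).neg) (fun y hy => (hvD y hy).neg) hcu.neg
      (fun y hy => by show -w y = ((y - k) ^ 2 - lam) * (-u y); rw [hweq y hy]; ring)
      (fun y hy => by show -u y ≤ B; have := (abs_le.1 (hsupu y hy)).1; linarith) (by simp [hu0])
      (by simpa using hulim.neg) x hx
  show |u x| ≤ G x
  rw [abs_le]
  exact ⟨by linarith, h1⟩
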